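/- Let q ∈ (0,1). Let u̲ ∈ X₀ with u̲ > 0 a.e. in Ω be a weak solution of (−Δ)^s u̲ = u̲^{q−1} in Ω, u̲ = 0 in ℝ^N∖Ω, and let u ∈ X₀ with u > 0 a.e. in Ω be a weak supersolution of the same equation, i.e. ⟨u,φ⟩ ≥ ∫_Ω u^{q−1}φ dx for every φ ∈ X₀ with φ ≥ 0. Then u̲ ≤ u a.e. in Ω. -/

import Mathlib

open MeasureTheory Metric Set
open scoped ENNReal

noncomputable section

/-- The squared Gagliardo seminorm
`‖u‖² = ∫∫ |u(x)−u(y)|²/|x−y|^{N+2s} dx dy` of `u : ℝ^N → ℝ`. -/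
def gagSq (N : ℕ) (s : ℝ) (u : EuclideanSpace ℝ (Fin N) → ℝ) : ℝ :=
  ∫ p : EuclideanSpace ℝ (Fin N) × EuclideanSpace ℝ (Fin N),
    (u p.1 - u p.2) ^ 2 / dist p.1 p.2 ^ ((N : ℝ) + 2 * s)

/-- The bilinear form `⟨u,v⟩ = ∫∫ (u(x)−u(y))(v(x)−v(y))/|x−y|^{N+2s} dx dy`
associated with the fractional Laplacian `(−Δ)^s`. -/
def gagForm (N : ℕ) (s : ℝ) (u v : EuclideanSpace ℝ (Fin N) → ℝ) : ℝ :=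
  ∫ p : EuclideanSpace ℝ (Fin N) × EuclideanSpace ℝ (Fin N),
    (u p.1 - u p.2) * (v p.1 - v p.2) / dist p.1 p.2 ^ ((N : ℝ) + 2 * s)

/-- Membership in the energy space `X₀`: `u ∈ L²(ℝ^N)`, `u = 0` a.e. outside `Ω`,
and the Gagliardo seminorm of `u` is finite. -/
structure MemX0 (N : ℕ) (s : ℝ) (Ω : Set (EuclideanSpace ℝ (Fin N)))
    (u : EuclideanSpace ℝ (Fin N) → ℝ) : Prop where
  memL2 : MemLp u 2 volume
  zero_outside : ∀ᵐ x, x ∉ Ω → u x = 0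
  gag_integrable : Integrable
    (fun p : EuclideanSpace ℝ (Fin N) × EuclideanSpace ℝ (Fin N) =>
      (u p.1 - u p.2) ^ 2 / dist p.1 p.2 ^ ((N : ℝ) + 2 * s)) volume

lemma key_ineq (a b : ℝ) : (max a 0 - max b 0) ^ 2 ≤ (a - b) * (max a 0 - max b 0) := by
  rcases le_total a 0 with h1 | h1 <;> rcases le_total b 0 with h2 | h2 <;>
    simp [max_eq_left, max_eq_right, h1, h2] <;> nlinarith

lemma div_mono_num (a b c : ℝ) (hc : 0 ≤ c) (h : a ≤ b) : a / c ≤ b / c := by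
  rw [div_eq_mul_inv, div_eq_mul_inv]
  exact mul_le_mul_of_nonneg_right h (inv_nonneg.2 hc)

lemma amgm_div (a b c : ℝ) (hc : 0 ≤ c) : |a * b / c| ≤ a ^ 2 / c / 2 + b ^ 2 / c / 2 := by
  have h2 : |a * b| ≤ (a ^ 2 + b ^ 2) / 2 := by
    rw [abs_mul]; nlinarith [sq_nonneg (|a| - |b|), sq_abs a, sq_abs b]
  calc |a * b / c| = |a * b| / c := by rw [abs_div, abs_of_nonneg hc]
    _ ≤ ((a ^ 2 + b ^ 2) / 2) / c := div_mono_num _ _ _ hc h2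
    _ = a ^ 2 / c / 2 + b ^ 2 / c / 2 := by ring


/-- comparison with the solution of the singular problem. If `u̲ ∈ X₀`,
`u̲ > 0` a.e. in `Ω`, is a weak solution of `(−Δ)^s u̲ = u̲^{q−1}` in `Ω`, `u̲ = 0` outside `Ω`,
and `u ∈ X₀`, `u > 0` a.e. in `Ω`, is a weak supersolution of the same equation, then
`u̲ ≤ u` a.e. in `Ω`. -/
theorem statement_8 (N : ℕ) (hN : 2 ≤ N) (s : ℝ) (hs : s ∈ Set.Ioo (0 : ℝ) 1)
    (Ω : Set (EuclideanSpace ℝ (Fin N))) (hΩo : IsOpen Ω) (hΩbd : Bornology.IsBounded Ω)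
    (q : ℝ) (hq : q ∈ Set.Ioo (0 : ℝ) 1)
    (ubar u : EuclideanSpace ℝ (Fin N) → ℝ)
    (hubar : MemX0 N s Ω ubar) (hu : MemX0 N s Ω u)
    (hubar_pos : ∀ᵐ x ∂(volume.restrict Ω), 0 < ubar x)
    (hu_pos : ∀ᵐ x ∂(volume.restrict Ω), 0 < u x)
    (hubar_int : ∀ φ : EuclideanSpace ℝ (Fin N) → ℝ, MemX0 N s Ω φ →
      IntegrableOn (fun x => ubar x ^ (q - 1) * φ x) Ω volume)
    (hu_int : ∀ φ : EuclideanSpace ℝ (Fin N) → ℝ, MemX0 N s Ω φ → (∀ x, 0 ≤ φ x) →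
      IntegrableOn (fun x => u x ^ (q - 1) * φ x) Ω volume)
    (hsol : ∀ φ : EuclideanSpace ℝ (Fin N) → ℝ, MemX0 N s Ω φ →
      gagForm N s ubar φ = ∫ x in Ω, ubar x ^ (q - 1) * φ x)
    (hsuper : ∀ φ : EuclideanSpace ℝ (Fin N) → ℝ, MemX0 N s Ω φ → (∀ x, 0 ≤ φ x) →
      (∫ x in Ω, u x ^ (q - 1) * φ x) ≤ gagForm N s u φ) :
    ∀ᵐ x ∂(volume.restrict Ω), ubar x ≤ u x := by
  haveI hnontriv : Nontrivial (EuclideanSpace ℝ (Fin N)) := by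
    refine nontrivial_of_ne (EuclideanSpace.single (⟨0, by omega⟩ : Fin N) (1 : ℝ)) 0 ?_
    intro h
    have h0 := congrArg (fun v => v (⟨0, by omega⟩ : Fin N)) h
    simp [EuclideanSpace.single_apply] at h0
  -- abbreviations
  set φ : EuclideanSpace ℝ (Fin N) → ℝ := fun x => max (ubar x - u x) 0 with hφdef
  have hφnn : ∀ x, 0 ≤ φ x := fun x => le_max_right _ _
  have hdnn : ∀ p : EuclideanSpace ℝ (Fin N) × EuclideanSpace ℝ (Fin N),
      0 ≤ dist p.1 p.2 ^ ((N : ℝ) + 2 * s) := fun p => Real.rpow_nonneg dist_nonneg _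
  -- measurability
  have hum : AEStronglyMeasurable ubar volume := hubar.memL2.aestronglyMeasurable
  have huum : AEStronglyMeasurable u volume := hu.memL2.aestronglyMeasurable
  have hφm : AEStronglyMeasurable φ volume :=
    ((hum.aemeasurable.sub huum.aemeasurable).max aemeasurable_const).aestronglyMeasurable
  have hdm : Measurable (fun p : EuclideanSpace ℝ (Fin N) × EuclideanSpace ℝ (Fin N) =>
      dist p.1 p.2 ^ ((N : ℝ) + 2 * s)) := by
    have h : Measurable (fun p : EuclideanSpace ℝ (Fin N) × EuclideanSpace ℝ (Fin N) =>
      dist p.1 p.2) := measurable_dist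
    fun_prop
  have hdiffm : ∀ f : EuclideanSpace ℝ (Fin N) → ℝ, AEStronglyMeasurable f volume →
      AEStronglyMeasurable
        (fun p : EuclideanSpace ℝ (Fin N) × EuclideanSpace ℝ (Fin N) => f p.1 - f p.2)
        volume := by
    intro f hf
    rw [Measure.volume_eq_prod]
    exact hf.comp_fst.sub hf.comp_snd
  -- integrability of the Gagliardo integrand of φ
  have hφgag : Integrable
      (fun p : EuclideanSpace ℝ (Fin N) × EuclideanSpace ℝ (Fin N) =>
        (φ p.1 - φ p.2) ^ 2 / dist p.1 p.2 ^ ((N : ℝ) + 2 * s)) volume := by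
    refine Integrable.mono'
      ((hubar.gag_integrable.const_mul 2).add (hu.gag_integrable.const_mul 2))
      ((((hdiffm φ hφm).aemeasurable.pow_const 2).div hdm.aemeasurable).aestronglyMeasurable) ?_
    refine Filter.Eventually.of_forall fun p => ?_
    have hle : (φ p.1 - φ p.2) ^ 2 ≤ ((ubar p.1 - u p.1) - (ubar p.2 - u p.2)) ^ 2 := by
      have h1 : |φ p.1 - φ p.2| ≤ |(ubar p.1 - u p.1) - (ubar p.2 - u p.2)| :=
        abs_max_sub_max_le_abs _ _ _
      calc (φ p.1 - φ p.2) ^ 2 = |φ p.1 - φ p.2| ^ 2 := (sq_abs _).symm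
        _ ≤ |(ubar p.1 - u p.1) - (ubar p.2 - u p.2)| ^ 2 := by
            exact pow_le_pow_left₀ (abs_nonneg _) h1 2
        _ = ((ubar p.1 - u p.1) - (ubar p.2 - u p.2)) ^ 2 := sq_abs _
    have hle2 : ((ubar p.1 - u p.1) - (ubar p.2 - u p.2)) ^ 2 ≤
        2 * (ubar p.1 - ubar p.2) ^ 2 + 2 * (u p.1 - u p.2) ^ 2 := by
      nlinarith [sq_nonneg ((ubar p.1 - ubar p.2) + (u p.1 - u p.2))]
    have habs : |(φ p.1 - φ p.2) ^ 2 / dist p.1 p.2 ^ ((N : ℝ) + 2 * s)| =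
        (φ p.1 - φ p.2) ^ 2 / dist p.1 p.2 ^ ((N : ℝ) + 2 * s) :=
      abs_of_nonneg (div_nonneg (sq_nonneg _) (hdnn p))
    rw [Real.norm_eq_abs, habs]
    calc (φ p.1 - φ p.2) ^ 2 / dist p.1 p.2 ^ ((N : ℝ) + 2 * s)
        ≤ (2 * (ubar p.1 - ubar p.2) ^ 2 + 2 * (u p.1 - u p.2) ^ 2) /
            dist p.1 p.2 ^ ((N : ℝ) + 2 * s) :=
          div_mono_num _ _ _ (hdnn p) (hle.trans hle2)
      _ = 2 * ((ubar p.1 - ubar p.2) ^ 2 / dist p.1 p.2 ^ ((N : ℝ) + 2 * s)) +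
            2 * ((u p.1 - u p.2) ^ 2 / dist p.1 p.2 ^ ((N : ℝ) + 2 * s)) := by ring
  -- φ ∈ X₀
  have hφzero : ∀ᵐ x, x ∉ Ω → φ x = 0 := by
    filter_upwards [hubar.zero_outside, hu.zero_outside] with x h1 h2 hx
    simp [hφdef, h1 hx, h2 hx]
  have hφX0 : MemX0 N s Ω φ := by
    refine ⟨?_, hφzero, hφgag⟩
    have := (hubar.memL2.sub hu.memL2).pos_part
    simpa [Pi.sub_apply] using this
  -- cross-term integrability
  have hcross : ∀ v : EuclideanSpace ℝ (Fin N) → ℝ, AEStronglyMeasurable v volume →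
      Integrable (fun p : EuclideanSpace ℝ (Fin N) × EuclideanSpace ℝ (Fin N) =>
        (v p.1 - v p.2) ^ 2 / dist p.1 p.2 ^ ((N : ℝ) + 2 * s)) volume →
      Integrable (fun p : EuclideanSpace ℝ (Fin N) × EuclideanSpace ℝ (Fin N) =>
        (v p.1 - v p.2) * (φ p.1 - φ p.2) / dist p.1 p.2 ^ ((N : ℝ) + 2 * s)) volume := by
    intro v hvm hvgag
    refine Integrable.mono' ((hvgag.div_const 2).add (hφgag.div_const 2))
      ((((hdiffm v hvm).aemeasurable.mul (hdiffm φ hφm).aemeasurable).div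
        hdm.aemeasurable).aestronglyMeasurable) ?_
    refine Filter.Eventually.of_forall fun p => ?_
    rw [Real.norm_eq_abs]
    exact amgm_div _ _ _ (hdnn p)
  have I_ubar := hcross ubar hum hubar.gag_integrable
  have I_u := hcross u huum hu.gag_integrable
  -- energy comparison
  have hA := hsol φ hφX0
  have hB := hsuper φ hφX0 hφnn
  have hint1 := hubar_int φ hφX0
  have hint2 := hu_int φ hφX0 hφnn
  have hneg : (∫ x in Ω, (ubar x ^ (q - 1) * φ x - u x ^ (q - 1) * φ x)) ≤ 0 := by
    refine integral_nonpos_of_ae ?_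
    filter_upwards [hubar_pos, hu_pos] with x hx1 hx2
    show ubar x ^ (q - 1) * φ x - u x ^ (q - 1) * φ x ≤ (0 : ℝ)
    rcases le_or_gt (ubar x) (u x) with h | h
    · have : φ x = 0 := max_eq_right (by linarith)
      simp [this]
    · have hpow : ubar x ^ (q - 1) ≤ u x ^ (q - 1) :=
        Real.rpow_le_rpow_of_nonpos hx2 h.le (by linarith [hq.2])
      have hc := hφnn x
      nlinarith [mul_nonneg (sub_nonneg.2 hpow) hc]
  have hdiffint : (∫ x in Ω, ubar x ^ (q - 1) * φ x) - (∫ x in Ω, u x ^ (q - 1) * φ x)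
      = ∫ x in Ω, (ubar x ^ (q - 1) * φ x - u x ^ (q - 1) * φ x) :=
    (integral_sub hint1 hint2).symm
  have hform : gagForm N s ubar φ - gagForm N s u φ =
      ∫ p : EuclideanSpace ℝ (Fin N) × EuclideanSpace ℝ (Fin N),
        ((ubar p.1 - u p.1) - (ubar p.2 - u p.2)) * (φ p.1 - φ p.2) /
          dist p.1 p.2 ^ ((N : ℝ) + 2 * s) := by
    unfold gagForm
    rw [← integral_sub I_ubar I_u]
    congr 1
    funext p
    ring
  have Iw : Integrable
      (fun p : EuclideanSpace ℝ (Fin N) × EuclideanSpace ℝ (Fin N) =>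
        ((ubar p.1 - u p.1) - (ubar p.2 - u p.2)) * (φ p.1 - φ p.2) /
          dist p.1 p.2 ^ ((N : ℝ) + 2 * s)) volume := by
    have h := I_ubar.sub I_u
    refine h.congr (Filter.Eventually.of_forall fun p => ?_)
    simp only [Pi.sub_apply]
    ring
  have hKey : (∫ p : EuclideanSpace ℝ (Fin N) × EuclideanSpace ℝ (Fin N),
      (φ p.1 - φ p.2) ^ 2 / dist p.1 p.2 ^ ((N : ℝ) + 2 * s)) ≤
      ∫ p : EuclideanSpace ℝ (Fin N) × EuclideanSpace ℝ (Fin N),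
        ((ubar p.1 - u p.1) - (ubar p.2 - u p.2)) * (φ p.1 - φ p.2) /
          dist p.1 p.2 ^ ((N : ℝ) + 2 * s) := by
    refine integral_mono hφgag Iw fun p => ?_
    exact div_mono_num _ _ _ (hdnn p) (key_ineq _ _)
  have hnn : 0 ≤ ∫ p : EuclideanSpace ℝ (Fin N) × EuclideanSpace ℝ (Fin N),
      (φ p.1 - φ p.2) ^ 2 / dist p.1 p.2 ^ ((N : ℝ) + 2 * s) :=
    integral_nonneg fun p => div_nonneg (sq_nonneg _) (hdnn p)
  have htot : (∫ p : EuclideanSpace ℝ (Fin N) × EuclideanSpace ℝ (Fin N),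
      (φ p.1 - φ p.2) ^ 2 / dist p.1 p.2 ^ ((N : ℝ) + 2 * s)) = 0 := by
    have : gagForm N s ubar φ - gagForm N s u φ ≤ 0 := by
      rw [hA]
      calc (∫ x in Ω, ubar x ^ (q - 1) * φ x) - gagForm N s u φ
          ≤ (∫ x in Ω, ubar x ^ (q - 1) * φ x) - ∫ x in Ω, u x ^ (q - 1) * φ x := by
            linarith
        _ = ∫ x in Ω, (ubar x ^ (q - 1) * φ x - u x ^ (q - 1) * φ x) := hdiffint
        _ ≤ 0 := hneg
    rw [hform] at this
    linarith
  have hzero_ae : (fun p : EuclideanSpace ℝ (Fin N) × EuclideanSpace ℝ (Fin N) =>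
      (φ p.1 - φ p.2) ^ 2 / dist p.1 p.2 ^ ((N : ℝ) + 2 * s)) =ᵐ[volume] 0 :=
    (integral_eq_zero_iff_of_nonneg_ae
      (Filter.Eventually.of_forall fun p => div_nonneg (sq_nonneg _) (hdnn p)) hφgag).1 htot
  -- the diagonal is a null set
  have hdiag : volume {p : EuclideanSpace ℝ (Fin N) × EuclideanSpace ℝ (Fin N) | p.1 = p.2}
      = 0 := by
    rw [Measure.volume_eq_prod, Measure.measure_prod_null
      (measurableSet_eq_fun measurable_fst measurable_snd)]
    refine Filter.Eventually.of_forall fun x => ?_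
    have hpre : Prod.mk x ⁻¹' {p : EuclideanSpace ℝ (Fin N) × EuclideanSpace ℝ (Fin N) |
        p.1 = p.2} = {x} := by
      ext y; simp [eq_comm]
    simp [hpre]
  have hoffdiag : ∀ᵐ p : EuclideanSpace ℝ (Fin N) × EuclideanSpace ℝ (Fin N), p.1 ≠ p.2 := by
    rw [ae_iff]
    simpa using hdiag
  have hconst : ∀ᵐ p : EuclideanSpace ℝ (Fin N) × EuclideanSpace ℝ (Fin N), φ p.1 = φ p.2 := by
    filter_upwards [hzero_ae, hoffdiag] with p hp hne
    have hd : 0 < dist p.1 p.2 ^ ((N : ℝ) + 2 * s) :=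
      Real.rpow_pos_of_pos (dist_pos.2 hne) _
    have : (φ p.1 - φ p.2) ^ 2 = 0 := by
      have := hp
      simp only [Pi.zero_apply] at this
      field_simp [hd.ne'] at this
      exact by nlinarith [this, sq_nonneg (φ p.1 - φ p.2)]
    have := sq_eq_zero_iff.1 this
    linarith
  -- Fubini and the complement of Ω
  have hcompl : volume Ωᶜ ≠ 0 := by
    intro h0
    have huniv : (volume : Measure (EuclideanSpace ℝ (Fin N))) univ = ∞ :=
      measure_univ_of_isAddLeftInvariant volume
    have : (volume : Measure (EuclideanSpace ℝ (Fin N))) univ ≤ volume Ω + volume Ωᶜ :=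
      (measure_mono (by simp)).trans (measure_union_le _ _)
    rw [huniv, h0, add_zero] at this
    exact absurd (lt_of_le_of_lt this hΩbd.measure_lt_top) (lt_irrefl _)
  have hfub : ∀ᵐ x : EuclideanSpace ℝ (Fin N), ∀ᵐ y : EuclideanSpace ℝ (Fin N), φ x = φ y := by
    rw [Measure.volume_eq_prod] at hconst
    exact Measure.ae_ae_of_ae_prod hconst
  have hφ0 : ∀ᵐ x : EuclideanSpace ℝ (Fin N), φ x = 0 := by
    filter_upwards [hfub] with x hx
    have hgood : ∀ᵐ y : EuclideanSpace ℝ (Fin N), φ x = φ y ∧ (y ∉ Ω → φ y = 0) :=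
      hx.and hφzero
    obtain ⟨y, hyΩ, hy1, hy2⟩ : ∃ y, y ∈ Ωᶜ ∧ φ x = φ y ∧ (y ∉ Ω → φ y = 0) := by
      by_contra hcon
      push_neg at hcon
      have hsub : Ωᶜ ⊆ {y | ¬(φ x = φ y ∧ (y ∉ Ω → φ y = 0))} := by
        intro y hy
        simp only [mem_setOf_eq]
        intro hP
        exact (hcon y hy hP.1).2 (hP.2 (hcon y hy hP.1).1)
      have hnull : volume {y | ¬(φ x = φ y ∧ (y ∉ Ω → φ y = 0))} = 0 := by
        rw [← ae_iff] at *
        exact hgood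
      exact hcompl (measure_mono_null hsub hnull)
    rw [hy1, hy2 hyΩ]
  -- conclude
  have hφ0' : ∀ᵐ x ∂(volume.restrict Ω), φ x = 0 := ae_restrict_of_ae hφ0
  filter_upwards [hφ0'] with x hx
  have : ubar x - u x ≤ 0 := by
    by_contra hcon
    push_neg at hcon
    have : φ x = ubar x - u x := max_eq_left hcon.le
    rw [hx] at this
    linarith
  linarith
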